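/- The function u : ℝ² → ℝ defined by u(x,y) = |x|^{4/3} − |y|^{4/3} is a viscosity solution of the infinity Laplace equation −Δ_∞u = −⟨D²u ∇u, ∇u⟩ = 0 on ℝ²; that is: for every C² function φ : ℝ² → ℝ and every point z₀ at which u − φ attains a local maximum, −⟨D²φ(z₀)∇φ(z₀), ∇φ(z₀)⟩ ≤ 0, and for every C² function φ and every point z₀ at which u − φ attains a local minimum, −⟨D²φ(z₀)∇φ(z₀), ∇φ(z₀)⟩ ≥ 0. -/

import Mathlib

open Set
open Filter
open scoped RealInnerProductSpace


noncomputable def Q (x : ℝ) : ℝ := |x| ^ ((4:ℝ)/3)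
noncomputable def Q' (x : ℝ) : ℝ := (4/3) * Real.sign x * |x| ^ ((1:ℝ)/3)

lemma hasDerivAt_Q (x : ℝ) : HasDerivAt Q (Q' x) x := by
  rcases lt_trichotomy x 0 with hx | rfl | hx
  · have h0 : HasDerivAt (fun z : ℝ => (-z) ^ ((4:ℝ)/3)) ((4:ℝ)/3 * (-x) ^ ((4:ℝ)/3 - 1) * (-1)) x :=
      (Real.hasDerivAt_rpow_const (p := (4:ℝ)/3) (Or.inl (neg_pos.mpr hx).ne')).comp x (hasDerivAt_neg x)
    have heq : Q' x = (4:ℝ)/3 * (-x) ^ ((4:ℝ)/3 - 1) * (-1) := by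
      rw [Q', Real.sign_of_neg hx, abs_of_neg hx, show (4:ℝ)/3 - 1 = 1/3 by norm_num]
      ring
    rw [heq]
    refine h0.congr_of_eventuallyEq ?_
    filter_upwards [eventually_lt_nhds hx] with z hz
    simp [Q, abs_of_neg hz]
  · have hQ' : Q' 0 = 0 := by simp [Q', Real.sign_zero]
    rw [hQ', hasDerivAt_iff_tendsto_slope]
    have h1 : Filter.Tendsto (fun t : ℝ => |t| ^ ((1:ℝ)/3)) (nhdsWithin 0 {(0:ℝ)}ᶜ) (nhds 0) := by
      have := ((continuous_abs.rpow_const (p := (1:ℝ)/3) (fun _ => Or.inr (by norm_num))).tendsto 0).mono_left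
        (nhdsWithin_le_nhds (s := {(0:ℝ)}ᶜ))
      simpa using this
    refine squeeze_zero_norm ?_ h1
    intro t
    rcases eq_or_ne t 0 with rfl | ht
    · simp [slope, Q]
    · have habs : |t| ≠ 0 := abs_ne_zero.mpr ht
      rw [slope_def_field]
      simp only [Q, abs_zero, Real.zero_rpow (by norm_num : ((4:ℝ)/3) ≠ 0), sub_zero]
      have h4 : abs (|t| ^ ((4:ℝ)/3)) = |t| ^ ((4:ℝ)/3) := abs_of_nonneg (by positivity)
      rw [div_eq_mul_inv, Real.norm_eq_abs, abs_mul, abs_inv, h4,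
        show (4:ℝ)/3 = 1/3 + 1 by norm_num, Real.rpow_add (abs_pos.mpr ht), Real.rpow_one,
        mul_assoc, mul_inv_cancel₀ habs, mul_one]
  · have h0 : HasDerivAt (fun z : ℝ => z ^ ((4:ℝ)/3)) ((4:ℝ)/3 * x ^ ((4:ℝ)/3 - 1)) x :=
      Real.hasDerivAt_rpow_const (Or.inl hx.ne')
    have heq : Q' x = (4:ℝ)/3 * x ^ ((4:ℝ)/3 - 1) := by
      rw [Q', Real.sign_of_pos hx, abs_of_pos hx, show (4:ℝ)/3 - 1 = 1/3 by norm_num]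
      ring
    rw [heq]
    refine h0.congr_of_eventuallyEq ?_
    filter_upwards [eventually_gt_nhds hx] with z hz
    simp [Q, abs_of_pos hz]

lemma hasDerivAt_Q' {x : ℝ} (hx : x ≠ 0) :
    HasDerivAt Q' ((4/9) * |x| ^ (-(2:ℝ)/3)) x := by
  rcases hx.lt_or_gt with hx | hx
  · have h0 : HasDerivAt (fun z : ℝ => -(4/3 * (-z) ^ ((1:ℝ)/3)))
        (-(4/3 * ((1:ℝ)/3 * (-x) ^ ((1:ℝ)/3 - 1) * (-1)))) x := by
      exact (((Real.hasDerivAt_rpow_const (p := (1:ℝ)/3)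
        (Or.inl (neg_pos.mpr hx).ne')).comp x (hasDerivAt_neg x)).const_mul (4/3)).neg
    have heq : (4:ℝ)/9 * |x| ^ (-(2:ℝ)/3) = -(4/3 * ((1:ℝ)/3 * (-x) ^ ((1:ℝ)/3 - 1) * (-1))) := by
      rw [abs_of_neg hx, show (1:ℝ)/3 - 1 = -2/3 by norm_num]
      ring
    rw [heq]
    refine h0.congr_of_eventuallyEq ?_
    filter_upwards [eventually_lt_nhds hx] with z hz
    rw [Q', Real.sign_of_neg hz, abs_of_neg hz]
    ring
  · have h0 : HasDerivAt (fun z : ℝ => 4/3 * z ^ ((1:ℝ)/3))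
        (4/3 * ((1:ℝ)/3 * x ^ ((1:ℝ)/3 - 1))) x :=
      (Real.hasDerivAt_rpow_const (Or.inl hx.ne')).const_mul (4/3)
    have heq : (4:ℝ)/9 * |x| ^ (-(2:ℝ)/3) = 4/3 * ((1:ℝ)/3 * x ^ ((1:ℝ)/3 - 1)) := by
      rw [abs_of_pos hx, show (1:ℝ)/3 - 1 = -2/3 by norm_num]
      ring
    rw [heq]
    refine h0.congr_of_eventuallyEq ?_
    filter_upwards [eventually_gt_nhds hx] with z hz
    rw [Q', Real.sign_of_pos hz, abs_of_pos hz]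
    ring

lemma Q'_sq_mul {x : ℝ} (hx : x ≠ 0) :
    Q' x * Q' x * ((4/9) * |x| ^ (-(2:ℝ)/3)) = 64/81 := by
  have hs : Real.sign x * Real.sign x = 1 := by
    rcases hx.lt_or_gt with h | h
    · rw [Real.sign_of_neg h]; norm_num
    · rw [Real.sign_of_pos h]; norm_num
  have habs : (0:ℝ) < |x| := abs_pos.mpr hx
  rw [Q']
  have : (4/3 * Real.sign x * |x| ^ ((1:ℝ)/3)) * (4/3 * Real.sign x * |x| ^ ((1:ℝ)/3))
      * ((4/9) * |x| ^ (-(2:ℝ)/3))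
      = (Real.sign x * Real.sign x) * (64/81) * (|x| ^ ((1:ℝ)/3) * |x| ^ ((1:ℝ)/3) * |x| ^ (-(2:ℝ)/3)) := by
    ring
  rw [this, hs, ← Real.rpow_add habs, ← Real.rpow_add habs]
  norm_num



/-- Second derivative test at an interior local max (with first derivative 0). -/
lemma keyA {F F₁ : ℝ → ℝ} {c : ℝ}
    (hmax : IsLocalMax F 0)
    (hF : ∀ᶠ t in nhds (0:ℝ), HasDerivAt F (F₁ t) t)
    (hF₁0 : F₁ 0 = 0)
    (hF₁ : HasDerivAt F₁ c 0) : c ≤ 0 := by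
  by_contra hc
  push_neg at hc
  -- F₁ is positive just to the right of 0
  have hslope : Tendsto (slope F₁ 0) (nhdsWithin 0 (Set.Ioi 0)) (nhds c) :=
    (hasDerivAt_iff_tendsto_slope.mp hF₁).mono_left
      (nhdsWithin_mono _ (fun x hx => ne_of_gt hx))
  have hpos : ∀ᶠ t in nhdsWithin (0:ℝ) (Set.Ioi 0), 0 < F₁ t := by
    filter_upwards [hslope.eventually (eventually_gt_nhds hc), self_mem_nhdsWithin]
      with t h4 ht
    rw [slope_def_field, hF₁0, sub_zero, sub_zero] at h4
    have := mul_pos h4 (ht : (0:ℝ) < t)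
    rwa [div_mul_cancel₀ _ (ne_of_gt ht)] at this
  rw [Filter.Eventually, Metric.mem_nhdsWithin_iff] at hpos
  obtain ⟨ε₂, hε₂, hpos⟩ := hpos
  have hFmax : ∀ᶠ t in nhds (0:ℝ), HasDerivAt F (F₁ t) t ∧ F t ≤ F 0 := hF.and hmax
  rw [Metric.eventually_nhds_iff] at hFmax
  obtain ⟨ε₁, hε₁, hFmax⟩ := hFmax
  set δ := min ε₁ ε₂ / 2 with hδdef
  have hδ : 0 < δ := by positivity
  have hδ₁ : δ < ε₁ := by
    calc δ < min ε₁ ε₂ := by rw [hδdef]; linarith [lt_min hε₁ hε₂]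
    _ ≤ ε₁ := min_le_left _ _
  have hδ₂ : δ < ε₂ := lt_of_lt_of_le (by rw [hδdef]; linarith [lt_min hε₁ hε₂]) (min_le_right _ _)
  have hmem : ∀ t ∈ Icc (0:ℝ) δ, HasDerivAt F (F₁ t) t ∧ F t ≤ F 0 := by
    intro t ht
    apply hFmax
    rw [Real.dist_eq, sub_zero, abs_of_nonneg ht.1]
    exact lt_of_le_of_lt ht.2 hδ₁
  have hmono : StrictMonoOn F (Icc 0 δ) := by
    apply strictMonoOn_of_deriv_pos (convex_Icc 0 δ)
    · intro t ht
      exact ((hmem t ht).1.continuousAt).continuousWithinAt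
    · intro t ht
      rw [interior_Icc] at ht
      rw [((hmem t ⟨le_of_lt ht.1, le_of_lt ht.2⟩).1).deriv]
      refine hpos ⟨Metric.mem_ball.mpr ?_, ht.1⟩
      rw [Real.dist_eq, sub_zero, abs_of_nonneg (le_of_lt ht.1)]
      exact lt_trans ht.2 hδ₂
  have h1 : F 0 < F δ := hmono ⟨le_refl _, le_of_lt hδ⟩ ⟨le_of_lt hδ, le_refl _⟩ hδ
  exact absurd (hmem δ ⟨le_of_lt hδ, le_refl _⟩).2 (not_le.mpr h1)

/-- No C² function can touch `|t|^{4/3}` from above at 0. -/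
lemma keyB {ψ ψ₁ : ℝ → ℝ} {c : ℝ}
    (hψ : ∀ t, HasDerivAt ψ (ψ₁ t) t)
    (hψ₁ : HasDerivAt ψ₁ c 0)
    (h : ∀ᶠ t in nhds (0:ℝ), |t| ^ ((4:ℝ)/3) ≤ ψ t - ψ 0) : False := by
  set χ : ℝ → ℝ := fun t => ψ t + ψ (-t) - 2 * ψ 0 with hχdef
  set χ₁ : ℝ → ℝ := fun t => ψ₁ t - ψ₁ (-t) with hχ₁def
  have hχd : ∀ t, HasDerivAt χ (χ₁ t) t := by
    intro t
    have h2 : HasDerivAt (fun s : ℝ => ψ (-s)) (ψ₁ (-t) * (-1)) t :=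
      (hψ (-t)).comp t (hasDerivAt_neg t)
    exact (((hψ t).add h2).sub_const (2 * ψ 0)).congr_deriv (by simp [hχ₁def]; ring)
  have hχ₁d : HasDerivAt χ₁ (c + c) 0 := by
    have hψ₁' : HasDerivAt ψ₁ c (-0) := by rw [neg_zero]; exact hψ₁
    have h2 : HasDerivAt (fun s : ℝ => ψ₁ (-s)) (c * (-1)) 0 :=
      hψ₁'.comp (0:ℝ) (hasDerivAt_neg 0)
    exact (hψ₁.sub h2).congr_deriv (by ring)
  have hχ₁0 : χ₁ 0 = 0 := by simp [hχ₁def]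
  set K : ℝ := c + c + 1 with hK
  -- eventually on the right, χ₁ t ≤ K * t
  have hslope : Tendsto (slope χ₁ 0) (nhdsWithin 0 (Set.Ioi 0)) (nhds (c + c)) :=
    (hasDerivAt_iff_tendsto_slope.mp hχ₁d).mono_left
      (nhdsWithin_mono _ (fun x hx => ne_of_gt hx))
  have hlt : ∀ᶠ t in nhdsWithin (0:ℝ) (Set.Ioi 0), χ₁ t ≤ K * t := by
    filter_upwards [hslope.eventually (eventually_lt_nhds (show c + c < K by rw [hK]; linarith)),
      self_mem_nhdsWithin] with t h4 ht
    rw [slope_def_field, hχ₁0, sub_zero, sub_zero] at h4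
    have := mul_lt_mul_of_pos_right h4 (ht : (0:ℝ) < t)
    rw [div_mul_cancel₀ _ (ne_of_gt ht)] at this
    linarith [mul_comm K t]
  rw [Filter.Eventually, Metric.mem_nhdsWithin_iff] at hlt
  obtain ⟨ε₂, hε₂, hlt⟩ := hlt
  rw [Metric.eventually_nhds_iff] at h
  obtain ⟨ε₁, hε₁, h⟩ := h
  set δ := min ε₁ ε₂ / 2 with hδdef
  have hδ : 0 < δ := by positivity
  have hδ₁ : δ < ε₁ := lt_of_lt_of_le (by rw [hδdef]; linarith [lt_min hε₁ hε₂]) (min_le_left _ _)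
  have hδ₂ : δ < ε₂ := lt_of_lt_of_le (by rw [hδdef]; linarith [lt_min hε₁ hε₂]) (min_le_right _ _)
  -- G := K t²/2 - χ is monotone on [0, δ]
  set G : ℝ → ℝ := fun t => K * t ^ 2 / 2 - χ t with hG
  have hGd : ∀ t, HasDerivAt G (K * t - χ₁ t) t := by
    intro t
    have h1 : HasDerivAt (fun t : ℝ => K * t ^ 2 / 2) (K * t) t := by
      have := ((hasDerivAt_pow 2 t).const_mul K).div_const 2
      simpa using this.congr_deriv (by push_cast; ring)
    exact h1.sub (hχd t)
  have hGmono : MonotoneOn G (Icc 0 δ) := by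
    apply monotoneOn_of_deriv_nonneg (convex_Icc 0 δ)
    · exact fun t _ => ((hGd t).continuousAt).continuousWithinAt
    · exact fun t _ => ((hGd t).differentiableAt).differentiableWithinAt
    · intro t ht
      rw [interior_Icc] at ht
      rw [(hGd t).deriv, sub_nonneg]
      refine hlt ⟨Metric.mem_ball.mpr ?_, ht.1⟩
      rw [Real.dist_eq, sub_zero, abs_of_nonneg (le_of_lt ht.1)]
      exact lt_trans ht.2 hδ₂
  -- hence χ t ≤ K t²/2 on [0, δ], while χ t ≥ 2 t^{4/3}
  have hkey : ∀ t ∈ Ioo (0:ℝ) δ, 2 * t ^ ((4:ℝ)/3) ≤ K * t ^ 2 / 2 := by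
    intro t ht
    have hG0 : G 0 ≤ G t := hGmono ⟨le_refl _, le_of_lt hδ⟩ ⟨le_of_lt ht.1, le_of_lt ht.2⟩ (le_of_lt ht.1)
    have hG00 : G 0 = 0 := by simp [hG, hχdef]; ring
    have hdist : dist t 0 < ε₁ := by
      rw [Real.dist_eq, sub_zero, abs_of_nonneg (le_of_lt ht.1)]
      exact lt_trans ht.2 hδ₁
    have hdist' : dist (-t) 0 < ε₁ := by
      rw [Real.dist_eq, sub_zero, abs_neg, abs_of_nonneg (le_of_lt ht.1)]
      exact lt_trans ht.2 hδ₁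
    have h1 := h hdist
    have h2 := h hdist'
    rw [abs_of_pos ht.1] at h1
    rw [abs_neg, abs_of_pos ht.1] at h2
    have : 2 * t ^ ((4:ℝ)/3) ≤ χ t := by
      simp only [hχdef]
      linarith
    have hle : χ t ≤ K * t ^ 2 / 2 := by
      have := hG0
      rw [hG00, hG] at this
      simp only at this
      linarith
    linarith
  -- contradiction: divide by t^{4/3} and let t → 0⁺
  have hdiv : ∀ t ∈ Ioo (0:ℝ) δ, 2 ≤ K / 2 * t ^ ((2:ℝ)/3) := by
    intro t ht
    have h43 : (0:ℝ) < t ^ ((4:ℝ)/3) := Real.rpow_pos_of_pos ht.1 _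
    have hsplit : t ^ (2:ℕ) = t ^ ((2:ℝ)/3) * t ^ ((4:ℝ)/3) := by
      rw [← Real.rpow_natCast t 2, ← Real.rpow_add ht.1]
      norm_num
    have := hkey t ht
    rw [hsplit] at this
    have h5 : 2 * t ^ ((4:ℝ)/3) ≤ (K / 2 * t ^ ((2:ℝ)/3)) * t ^ ((4:ℝ)/3) := by linarith
    exact le_of_mul_le_mul_right (by linarith) h43
  have hlim : Tendsto (fun t : ℝ => K / 2 * t ^ ((2:ℝ)/3)) (nhdsWithin 0 (Set.Ioi 0)) (nhds 0) := by
    have hcont : Tendsto (fun t : ℝ => t ^ ((2:ℝ)/3)) (nhds (0:ℝ)) (nhds ((0:ℝ) ^ ((2:ℝ)/3))) :=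
      (Real.continuousAt_rpow_const 0 ((2:ℝ)/3) (Or.inr (by norm_num)))
    have : ((0:ℝ) ^ ((2:ℝ)/3)) = 0 := Real.zero_rpow (by norm_num)
    rw [this] at hcont
    have := (hcont.const_mul (K / 2)).mono_left (nhdsWithin_le_nhds (s := Set.Ioi (0:ℝ)))
    simpa using this
  have hev : ∀ᶠ t in nhdsWithin (0:ℝ) (Set.Ioi 0), K / 2 * t ^ ((2:ℝ)/3) < 2 :=
    hlim.eventually (eventually_lt_nhds (by norm_num))
  have hev2 : ∀ᶠ t in nhdsWithin (0:ℝ) (Set.Ioi 0), t ∈ Ioo (0:ℝ) δ := by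
    rw [Filter.Eventually, Metric.mem_nhdsWithin_iff]
    refine ⟨δ, hδ, fun t htm => ⟨htm.2, ?_⟩⟩
    have := Metric.mem_ball.mp htm.1
    rw [Real.dist_eq, sub_zero, abs_of_nonneg (le_of_lt htm.2)] at this
    exact this
  obtain ⟨t, h1, h2⟩ := (hev.and hev2).exists
  exact absurd (hdiv t h2) (not_le.mpr h1)

local notation "EE" => EuclideanSpace ℝ (Fin 2)

lemma fderiv_apply_eq_inner (φ : EE → ℝ) (x : EE) (v : EE) :
    fderiv ℝ φ x v = ⟪gradient φ x, v⟫ := by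
  show fderiv ℝ φ x v = ⟪(InnerProductSpace.toDual ℝ EE).symm (fderiv ℝ φ x), v⟫
  rw [← InnerProductSpace.toDual_apply_apply, LinearIsometryEquiv.apply_symm_apply]

lemma grad_differentiable {φ : EE → ℝ} (hφ : ContDiff ℝ 2 φ) :
    Differentiable ℝ (gradient φ) := by
  have h1 : ContDiff ℝ 1 (fderiv ℝ φ) := hφ.fderiv_right (by norm_num)
  have h2 : Differentiable ℝ (fderiv ℝ φ) := h1.differentiable one_ne_zero
  exact ((InnerProductSpace.toDual ℝ EE).symm.toContinuousLinearEquiv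
    : (EE →L[ℝ] ℝ) ≃L[ℝ] EE).toContinuousLinearMap.differentiable.comp h2

lemma hasDerivAt_line (z₀ g : EE) (t : ℝ) :
    HasDerivAt (fun s : ℝ => z₀ + s • g) g t := by
  have := ((hasDerivAt_id t).smul_const g).const_add z₀
  simpa using this

lemma hasDerivAt_phi_line {φ : EE → ℝ} (hφ : ContDiff ℝ 2 φ) (z₀ g : EE) (t : ℝ) :
    HasDerivAt (fun s : ℝ => φ (z₀ + s • g)) ⟪gradient φ (z₀ + t • g), g⟫ t := by
  have h1 := ((hφ.differentiable (by norm_num) (z₀ + t • g)).hasFDerivAt).comp_hasDerivAt t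
    (hasDerivAt_line z₀ g t)
  rwa [fderiv_apply_eq_inner] at h1

lemma hasDerivAt_inner_grad_line {φ : EE → ℝ} (hφ : ContDiff ℝ 2 φ) (z₀ g : EE) :
    HasDerivAt (fun t : ℝ => ⟪gradient φ (z₀ + t • g), g⟫)
      ⟪fderiv ℝ (gradient φ) z₀ g, g⟫ 0 := by
  have hvec : HasDerivAt (fun t : ℝ => gradient φ (z₀ + t • g))
      (fderiv ℝ (gradient φ) z₀ g) 0 := by
    have h0 : HasFDerivAt (gradient φ) (fderiv ℝ (gradient φ) z₀) (z₀ + (0:ℝ) • g) := by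
      simpa using (grad_differentiable hφ z₀).hasFDerivAt
    exact h0.comp_hasDerivAt 0 (hasDerivAt_line z₀ g 0)
  have h2 := (innerSL ℝ g).hasFDerivAt.comp_hasDerivAt 0 hvec
  have h2' : HasDerivAt (fun t : ℝ => ⟪g, gradient φ (z₀ + t • g)⟫)
      ⟪g, fderiv ℝ (gradient φ) z₀ g⟫ 0 := h2
  have h3 := h2'.congr_deriv
    (show ⟪g, fderiv ℝ (gradient φ) z₀ g⟫ = ⟪fderiv ℝ (gradient φ) z₀ g, g⟫ from
      real_inner_comm _ _)
  have h5 : (fun t : ℝ => ⟪g, gradient φ (z₀ + t • g)⟫)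
      = fun t : ℝ => ⟪gradient φ (z₀ + t • g), g⟫ := by
    funext t
    exact real_inner_comm _ _
  exact h5 ▸ h3

/-- The core subsolution estimate. -/
lemma key_sub {φ : EE → ℝ} (hφ : ContDiff ℝ 2 φ) (z₀ : EE)
    (hmax : IsLocalMax (fun z : EE => (Q (z 0) - Q (z 1)) - φ z) z₀) :
    0 ≤ ⟪fderiv ℝ (gradient φ) z₀ (gradient φ z₀), gradient φ z₀⟫ := by
  by_cases hz : z₀ 0 = 0
  · -- no test function can touch from above here
    exfalso
    set e₀ : EE := EuclideanSpace.single (0 : Fin 2) (1:ℝ) with he₀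
    have hcomp : ∀ i, ∀ t : ℝ, (z₀ + t • e₀) i = z₀ i + t * e₀ i := by
      intro i t
      simp [PiLp.add_apply, PiLp.smul_apply, smul_eq_mul]
    have he00 : e₀ 0 = 1 := by simp [he₀, EuclideanSpace.single_apply]
    have he01 : e₀ 1 = 0 := by simp [he₀, EuclideanSpace.single_apply]
    have hev : ∀ᶠ t in nhds (0:ℝ),
        |t| ^ ((4:ℝ)/3) ≤ φ (z₀ + t • e₀) - φ (z₀ + (0:ℝ) • e₀) := by
      have hz000 : φ (z₀ + (0:ℝ) • e₀) = φ z₀ := by rw [zero_smul, add_zero]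
      have hT : Tendsto (fun t : ℝ => z₀ + t • e₀) (nhds 0) (nhds z₀) := by
        have hcont : ContinuousAt (fun t : ℝ => z₀ + t • e₀) 0 :=
          (hasDerivAt_line z₀ e₀ 0).continuousAt
        have h40 : z₀ + (0:ℝ) • e₀ = z₀ := by simp
        simpa [ContinuousAt, h40] using hcont
      have h5 := hT.eventually hmax
      filter_upwards [h5] with t ht
      rw [hcomp 0 t, hcomp 1 t, he00, he01, hz] at ht
      have hQ0 : Q 0 = 0 := by simp [Q, Real.zero_rpow (by norm_num : ((4:ℝ)/3) ≠ 0)]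
      rw [hz000]
      have ht' : Q (0 + t * 1) - Q (z₀ 1 + t * 0) - φ (z₀ + t • e₀)
          ≤ Q 0 - Q (z₀ 1) - φ z₀ := ht
      rw [hQ0] at ht'
      simp only [zero_add, mul_one, mul_zero, add_zero] at ht'
      have : Q t ≤ φ (z₀ + t • e₀) - φ z₀ := by linarith
      simpa [Q] using this
    exact keyB (fun t => hasDerivAt_phi_line hφ z₀ e₀ t)
      (hasDerivAt_inner_grad_line hφ z₀ e₀) hev
  · -- z₀ 0 ≠ 0 : the gradient of φ equals that of u, and we compare second derivatives
    set x₀ := z₀ 0 with hx₀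
    set y₀ := z₀ 1 with hy₀
    set a := Q' x₀ with ha
    set b := -Q' y₀ with hb
    set E0 : EE := EuclideanSpace.single (0 : Fin 2) (1:ℝ) with hE0
    set E1 : EE := EuclideanSpace.single (1 : Fin 2) (1:ℝ) with hE1
    set g : EE := a • E0 + b • E1 with hg
    have hgapp : ∀ i, g i = a * E0 i + b * E1 i := by
      intro i; simp [hg, PiLp.add_apply, PiLp.smul_apply, smul_eq_mul]
    have hg0 : g 0 = a := by rw [hgapp]; simp [hE0, hE1, EuclideanSpace.single_apply]
    have hg1 : g 1 = b := by rw [hgapp]; simp [hE0, hE1, EuclideanSpace.single_apply]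
    have hginner : ∀ v : EE, ⟪g, v⟫ = a * v 0 + b * v 1 := by
      intro v
      rw [hg, inner_add_left, real_inner_smul_left, real_inner_smul_left, hE0, hE1,
        EuclideanSpace.inner_single_left, EuclideanSpace.inner_single_left]
      push_cast
      ring_nf
      simp [RCLike.conj_to_real]
    -- the fderiv of u at z₀
    set D : EE →L[ℝ] ℝ := Q' x₀ • (EuclideanSpace.proj (0:Fin 2) : EE →L[ℝ] ℝ)
      - Q' y₀ • (EuclideanSpace.proj (1:Fin 2) : EE →L[ℝ] ℝ) with hD
    have hp0 : HasFDerivAt (fun z : EE => z 0)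
        (EuclideanSpace.proj (0:Fin 2) : EE →L[ℝ] ℝ) z₀ :=
      (EuclideanSpace.proj (0:Fin 2) : EE →L[ℝ] ℝ).hasFDerivAt
    have hp1 : HasFDerivAt (fun z : EE => z 1)
        (EuclideanSpace.proj (1:Fin 2) : EE →L[ℝ] ℝ) z₀ :=
      (EuclideanSpace.proj (1:Fin 2) : EE →L[ℝ] ℝ).hasFDerivAt
    have hUd : HasFDerivAt (fun z : EE => Q (z 0) - Q (z 1)) D z₀ := by
      have h0 : HasFDerivAt (fun z : EE => Q (z 0))
          (Q' x₀ • (EuclideanSpace.proj (0:Fin 2) : EE →L[ℝ] ℝ)) z₀ :=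
        by have h := (hasDerivAt_Q x₀).comp_hasFDerivAt z₀ hp0; exact h
      have h1 : HasFDerivAt (fun z : EE => Q (z 1))
          (Q' y₀ • (EuclideanSpace.proj (1:Fin 2) : EE →L[ℝ] ℝ)) z₀ :=
        by have h := (hasDerivAt_Q y₀).comp_hasFDerivAt z₀ hp1; exact h
      exact h0.sub h1
    have hφd : Differentiable ℝ φ := hφ.differentiable (by norm_num)
    have hDeq : fderiv ℝ φ z₀ = D := by
      have hfd0 : fderiv ℝ (fun z : EE => (Q (z 0) - Q (z 1)) - φ z) z₀ = 0 :=
        hmax.fderiv_eq_zero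
      have hsub : HasFDerivAt (fun z : EE => (Q (z 0) - Q (z 1)) - φ z)
          (D - fderiv ℝ φ z₀) z₀ := hUd.sub (hφd z₀).hasFDerivAt
      have h2 := hsub.fderiv
      rw [hfd0] at h2
      have h3 : D - fderiv ℝ φ z₀ = 0 := h2.symm
      rw [sub_eq_zero] at h3
      exact h3.symm
    have hgrad : gradient φ z₀ = g := by
      apply ext_inner_right ℝ
      intro v
      rw [← fderiv_apply_eq_inner, hDeq, hginner v]
      rw [hD]
      simp only [ContinuousLinearMap.sub_apply, ContinuousLinearMap.smul_apply,
        PiLp.proj_apply, smul_eq_mul]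
      rw [ha, hb]
      ring
    -- derivative of u - φ along the line through z₀ in direction g
    have hlin : ∀ t : ℝ, HasDerivAt (fun s : ℝ => x₀ + s * a) a t := by
      intro t
      simpa using ((hasDerivAt_id t).mul_const a).const_add x₀
    have hlin' : ∀ t : ℝ, HasDerivAt (fun s : ℝ => y₀ + s * b) b t := by
      intro t
      simpa using ((hasDerivAt_id t).mul_const b).const_add y₀
    have hF : ∀ t : ℝ, HasDerivAt
        (fun s : ℝ => Q (x₀ + s * a) - Q (y₀ + s * b) - φ (z₀ + s • g))
        (Q' (x₀ + t * a) * a - Q' (y₀ + t * b) * b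
          - ⟪gradient φ (z₀ + t • g), g⟫) t := by
      intro t
      have h1 : HasDerivAt (fun s : ℝ => Q (x₀ + s * a)) (Q' (x₀ + t * a) * a) t :=
        (hasDerivAt_Q _).comp t (hlin t)
      have h2 : HasDerivAt (fun s : ℝ => Q (y₀ + s * b)) (Q' (y₀ + t * b) * b) t :=
        (hasDerivAt_Q _).comp t (hlin' t)
      exact (h1.sub h2).sub (hasDerivAt_phi_line hφ z₀ g t)
    have hcomp : ∀ t : ℝ, (z₀ + t • g) 0 = x₀ + t * a ∧ (z₀ + t • g) 1 = y₀ + t * b := by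
      intro t
      constructor
      · rw [PiLp.add_apply, PiLp.smul_apply, smul_eq_mul, hg0]
      · rw [PiLp.add_apply, PiLp.smul_apply, smul_eq_mul, hg1]
    have hmaxF : IsLocalMax
        (fun s : ℝ => Q (x₀ + s * a) - Q (y₀ + s * b) - φ (z₀ + s • g)) 0 := by
      have hT : Tendsto (fun t : ℝ => z₀ + t • g) (nhds 0) (nhds z₀) := by
        have hcont : ContinuousAt (fun t : ℝ => z₀ + t • g) 0 :=
          (hasDerivAt_line z₀ g 0).continuousAt
        have h40 : z₀ + (0:ℝ) • g = z₀ := by rw [zero_smul, add_zero]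
        simpa [ContinuousAt, h40] using hcont
      have h5 := hT.eventually hmax
      have hval : Q (x₀ + (0:ℝ) * a) - Q (y₀ + (0:ℝ) * b) - φ (z₀ + (0:ℝ) • g)
          = Q x₀ - Q y₀ - φ z₀ := by
        rw [zero_mul, add_zero, zero_mul, add_zero, zero_smul, add_zero]
      show ∀ᶠ t in nhds (0:ℝ),
        Q (x₀ + t * a) - Q (y₀ + t * b) - φ (z₀ + t • g)
          ≤ Q (x₀ + (0:ℝ) * a) - Q (y₀ + (0:ℝ) * b) - φ (z₀ + (0:ℝ) • g)
      rw [hval]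
      filter_upwards [h5] with t ht
      have ht' : Q ((z₀ + t • g) 0) - Q ((z₀ + t • g) 1) - φ (z₀ + t • g)
          ≤ Q (z₀ 0) - Q (z₀ 1) - φ z₀ := ht
      rw [(hcomp t).1, (hcomp t).2] at ht'
      exact ht'
    have hgradg : gradient φ (z₀ + (0:ℝ) • g) = g := by
      rw [zero_smul, add_zero, hgrad]
    have hF₁0 : Q' (x₀ + 0 * a) * a - Q' (y₀ + 0 * b) * b
        - ⟪gradient φ (z₀ + (0:ℝ) • g), g⟫ = 0 := by
      rw [zero_mul, add_zero, zero_mul, add_zero, hgradg, hginner g, hg0, hg1]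
      have h1 : Q' x₀ = a := ha.symm
      have h2 : Q' y₀ = -b := by rw [hb]; ring
      rw [h1, h2]
      ring
    -- second derivative of the first term
    have hq' : HasDerivAt Q' ((4:ℝ)/9 * |x₀| ^ (-(2:ℝ)/3)) (x₀ + 0 * a) := by
      rw [zero_mul, add_zero]
      exact hasDerivAt_Q' hz
    have hterm1 : HasDerivAt (fun t : ℝ => Q' (x₀ + t * a) * a)
        ((4:ℝ)/9 * |x₀| ^ (-(2:ℝ)/3) * a * a) 0 := by
      have := (hq'.comp 0 (hlin 0)).mul_const a
      exact this.congr_deriv (by ring)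
    have h64 : (4:ℝ)/9 * |x₀| ^ (-(2:ℝ)/3) * a * a = 64/81 := by
      have h5 := Q'_sq_mul hz
      rw [ha]
      linarith [h5, mul_comm (Q' x₀ * Q' x₀) ((4:ℝ)/9 * |x₀| ^ (-(2:ℝ)/3))]
    obtain ⟨c₂, hterm2, hc₂⟩ : ∃ c₂ : ℝ,
        HasDerivAt (fun t : ℝ => Q' (y₀ + t * b) * b) c₂ 0 ∧ c₂ ≤ 64/81 := by
      by_cases hy : y₀ = 0
      · have hb0 : b = 0 := by rw [hb, hy]; simp [Q', Real.sign_zero]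
        refine ⟨0, ?_, by norm_num⟩
        have heq : (fun t : ℝ => Q' (y₀ + t * b) * b) = fun _ => 0 := by
          funext s; rw [hb0, mul_zero]
        rw [heq]
        exact hasDerivAt_const 0 0
      · refine ⟨(4:ℝ)/9 * |y₀| ^ (-(2:ℝ)/3) * b * b, ?_, ?_⟩
        · have hq2 : HasDerivAt Q' ((4:ℝ)/9 * |y₀| ^ (-(2:ℝ)/3)) (y₀ + 0 * b) := by
            rw [zero_mul, add_zero]
            exact hasDerivAt_Q' hy
          have := (hq2.comp 0 (hlin' 0)).mul_const b
          exact this.congr_deriv (by ring)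
        · have h5 := Q'_sq_mul hy
          have hbb : b * b = Q' y₀ * Q' y₀ := by rw [hb]; ring
          have : (4:ℝ)/9 * |y₀| ^ (-(2:ℝ)/3) * b * b = 64/81 := by
            rw [mul_assoc, hbb]
            linarith [mul_comm ((4:ℝ)/9 * |y₀| ^ (-(2:ℝ)/3)) (Q' y₀ * Q' y₀)]
          linarith
    have hF₁d : HasDerivAt
        (fun t : ℝ => Q' (x₀ + t * a) * a - Q' (y₀ + t * b) * b
          - ⟪gradient φ (z₀ + t • g), g⟫)
        ((4:ℝ)/9 * |x₀| ^ (-(2:ℝ)/3) * a * a - c₂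
          - ⟪fderiv ℝ (gradient φ) z₀ g, g⟫) 0 :=
      (hterm1.sub hterm2).sub (hasDerivAt_inner_grad_line hφ z₀ g)
    have hkeyA := keyA hmaxF (Filter.Eventually.of_forall hF) hF₁0 hF₁d
    rw [hgrad]
    linarith

section main

open scoped RealInnerProductSpace

theorem stmt_17
    (u : EuclideanSpace ℝ (Fin 2) → ℝ)
    (hu : ∀ z : EuclideanSpace ℝ (Fin 2),
      u z = |z 0| ^ ((4:ℝ)/3) - |z 1| ^ ((4:ℝ)/3)) :
    (∀ φ : EuclideanSpace ℝ (Fin 2) → ℝ, ContDiff ℝ 2 φ →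
      ∀ z₀ : EuclideanSpace ℝ (Fin 2), IsLocalMax (fun z => u z - φ z) z₀ →
        -⟪fderiv ℝ (gradient φ) z₀ (gradient φ z₀), gradient φ z₀⟫ ≤ 0) ∧
    (∀ φ : EuclideanSpace ℝ (Fin 2) → ℝ, ContDiff ℝ 2 φ →
      ∀ z₀ : EuclideanSpace ℝ (Fin 2), IsLocalMin (fun z => u z - φ z) z₀ →
        0 ≤ -⟪fderiv ℝ (gradient φ) z₀ (gradient φ z₀), gradient φ z₀⟫) := by
  have huQ : ∀ z : EuclideanSpace ℝ (Fin 2), u z = Q (z 0) - Q (z 1) := hu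
  constructor
  · intro φ hφ z₀ hmax
    have hmax' : IsLocalMax (fun z : EuclideanSpace ℝ (Fin 2) =>
        (Q (z 0) - Q (z 1)) - φ z) z₀ := by
      have : (fun z : EuclideanSpace ℝ (Fin 2) => u z - φ z)
          = fun z => (Q (z 0) - Q (z 1)) - φ z := by
        funext z; rw [huQ z]
      rwa [this] at hmax
    have h0 := key_sub hφ z₀ hmax'
    linarith
  · intro φ hφ z₀ hmin
    set σ : EuclideanSpace ℝ (Fin 2) ≃ₗᵢ[ℝ] EuclideanSpace ℝ (Fin 2) :=
      LinearIsometryEquiv.piLpCongrLeft 2 ℝ ℝ (Equiv.swap (0:Fin 2) 1) with hσdef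
    have hσ0 : ∀ v : EuclideanSpace ℝ (Fin 2), (σ v) 0 = v 1 := by
      intro v
      simp [hσdef, LinearIsometryEquiv.piLpCongrLeft_apply, Equiv.piCongrLeft']
    have hσ1 : ∀ v : EuclideanSpace ℝ (Fin 2), (σ v) 1 = v 0 := by
      intro v
      simp [hσdef, LinearIsometryEquiv.piLpCongrLeft_apply, Equiv.piCongrLeft']
    have hσσ : ∀ v : EuclideanSpace ℝ (Fin 2), σ (σ v) = v := by
      intro v
      ext i
      fin_cases i
      · exact (hσ0 (σ v)).trans (hσ1 v)
      · exact (hσ1 (σ v)).trans (hσ0 v)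
    set A : EuclideanSpace ℝ (Fin 2) →L[ℝ] EuclideanSpace ℝ (Fin 2) :=
      σ.toContinuousLinearEquiv.toContinuousLinearMap with hA
    have hAapp : ∀ v, A v = σ v := fun v => rfl
    set φ' : EuclideanSpace ℝ (Fin 2) → ℝ := fun w => -φ (σ w) with hφ'def
    have hφ'C : ContDiff ℝ 2 φ' := by
      have h1 : ContDiff ℝ 2 (fun w : EuclideanSpace ℝ (Fin 2) => φ (A w)) :=
        hφ.comp A.contDiff
      exact h1.neg
    have hφd : Differentiable ℝ φ := hφ.differentiable (by norm_num)
    -- the local max of u - φ' at σ z₀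
    have hmax' : IsLocalMax (fun z : EuclideanSpace ℝ (Fin 2) =>
        (Q (z 0) - Q (z 1)) - φ' z) (σ z₀) := by
      have hT : Filter.Tendsto σ (nhds (σ z₀)) (nhds z₀) := by
        have := σ.continuous.continuousAt (x := σ z₀)
        rwa [ContinuousAt, hσσ z₀] at this
      have hmin' : ∀ᶠ z in nhds z₀, φ z - u z ≤ φ z₀ - u z₀ := by
        filter_upwards [hmin] with z hz
        linarith [hz]
      have h5 := hT.eventually hmin'
      show ∀ᶠ w in nhds (σ z₀), _ ≤ Q ((σ z₀) 0) - Q ((σ z₀) 1) - φ' (σ z₀)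
      rw [hσ0 z₀, hσ1 z₀]
      filter_upwards [h5] with w hw
      rw [huQ (σ w), hσ0 w, hσ1 w] at hw
      have hval : φ' (σ z₀) = -φ z₀ := by rw [hφ'def]; simp [hσσ z₀]
      rw [hval, huQ z₀] at *
      simp only [hφ'def]
      linarith
    have h0 := key_sub hφ'C (σ z₀) hmax'
    -- identify gradient of φ'
    have hgrad' : ∀ w, gradient φ' w = σ.symm (-(gradient φ (σ w))) := by
      intro w
      apply ext_inner_right ℝ
      intro v
      rw [← fderiv_apply_eq_inner]
      have hFd : HasFDerivAt φ' (-((fderiv ℝ φ (σ w)).comp A)) w := by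
        have h1 : HasFDerivAt (fun w' : EuclideanSpace ℝ (Fin 2) => φ (A w'))
            ((fderiv ℝ φ (σ w)).comp A) w :=
          HasFDerivAt.comp w ((hφd (σ w)).hasFDerivAt) A.hasFDerivAt
        exact h1.neg
      rw [hFd.fderiv]
      have hL : (-((fderiv ℝ φ (σ w)).comp A)) v = -(fderiv ℝ φ (σ w) (σ v)) := rfl
      rw [hL, fderiv_apply_eq_inner]
      have hR : ⟪σ.symm (-(gradient φ (σ w))), v⟫
          = ⟪-(gradient φ (σ w)), σ v⟫ := by
        rw [← LinearIsometryEquiv.inner_map_map σ (σ.symm (-(gradient φ (σ w)))) v,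
          LinearIsometryEquiv.apply_symm_apply]
      rw [hR, inner_neg_left]
    set g : EuclideanSpace ℝ (Fin 2) := gradient φ z₀ with hgdef
    set H : EuclideanSpace ℝ (Fin 2) →L[ℝ] EuclideanSpace ℝ (Fin 2) :=
      fderiv ℝ (gradient φ) z₀ with hHdef
    set B : EuclideanSpace ℝ (Fin 2) →L[ℝ] EuclideanSpace ℝ (Fin 2) :=
      -(σ.symm.toContinuousLinearEquiv.toContinuousLinearMap) with hB
    have hBapp : ∀ v, B v = -(σ.symm v) := fun v => rfl
    have hgd' : HasFDerivAt (gradient φ') ((B.comp H).comp A) (σ z₀) := by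
      have hAz : A (σ z₀) = z₀ := by rw [hAapp, hσσ]
      have hvec' : HasFDerivAt (gradient φ) H (A (σ z₀)) := by
        rw [hAz]
        exact (grad_differentiable hφ z₀).hasFDerivAt
      have h2 := HasFDerivAt.comp (σ z₀) B.hasFDerivAt
        (HasFDerivAt.comp (σ z₀) hvec' A.hasFDerivAt)
      refine h2.congr_of_eventuallyEq (Filter.Eventually.of_forall fun w => ?_)
      rw [hgrad' w]
      exact map_neg σ.symm _
    have hgσ : gradient φ' (σ z₀) = σ.symm (-g) := by rw [hgrad' (σ z₀), hσσ z₀]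
    have hfinal : ⟪fderiv ℝ (gradient φ') (σ z₀) (gradient φ' (σ z₀)), gradient φ' (σ z₀)⟫
        = -⟪H g, g⟫ := by
      rw [hgd'.fderiv, hgσ]
      have hAg : A (σ.symm (-g)) = -g := by
        rw [hAapp]
        exact σ.apply_symm_apply (-g)
      have e1 : ((B.comp H).comp A) (σ.symm (-g)) = σ.symm (H g) := by
        calc ((B.comp H).comp A) (σ.symm (-g)) = B (H (A (σ.symm (-g)))) := rfl
        _ = B (H (-g)) := by rw [hAg]
        _ = B (-(H g)) := by rw [map_neg]
        _ = -(σ.symm (-(H g))) := hBapp _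
        _ = σ.symm (H g) := by rw [map_neg, neg_neg]
      rw [e1,
        show ⟪σ.symm (H g), σ.symm (-g)⟫ = ⟪H g, -g⟫ from σ.symm.inner_map_map _ _,
        inner_neg_right]
    linarith [h0, hfinal.symm.le, hfinal.le]

end main
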